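/- Let ψ₁,…,ψ_l ∈ L²(𝕋) and let θ₀ ∈ [0,2π). Then there exists a trigonometric polynomial f (i.e. a finite real linear combination of 1, sin(nθ), cos(nθ)) such that f(θ₀) ≠ 0 and ⟨f, ψⱼ⟩_{L²(𝕋)} = 0 for all j = 1,…,l. -/

import Mathlib

open MeasureTheory

private lemma trig_identity (N : ℕ) (lam : ℕ → ℝ) (θ₀ θ : ℝ) :
    lam 0 + ∑ n ∈ Finset.Icc 1 N,
      ((lam n * Real.cos (n * θ₀)) * Real.cos (n * θ) +
        (lam n * Real.sin (n * θ₀)) * Real.sin (n * θ))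
    = ∑ n ∈ Finset.range (N + 1), lam n * Real.cos (n * (θ - θ₀)) := by
  have h : Finset.range (N + 1) = insert 0 (Finset.Icc 1 N) := by
    ext n; simp [Finset.mem_range, Finset.mem_Icc, Nat.lt_succ_iff]; omega
  rw [h, Finset.sum_insert (by simp)]
  simp only [Nat.cast_zero, zero_mul, Real.cos_zero, mul_one]
  congr 1
  refine Finset.sum_congr rfl fun n hn => ?_
  have : (n : ℝ) * (θ - θ₀) = n * θ - n * θ₀ := by ring
  rw [this, Real.cos_sub]; ring

/-- Given ψ₁,…,ψ_l ∈ L²(𝕋) and θ₀, there is a trigonometric polynomial f with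
f(θ₀) ≠ 0 and ⟨f, ψⱼ⟩_{L²} = 0 for all j. -/
theorem stmt10 (l : ℕ) (ψ : Fin l → ℝ → ℝ)
    (hψ : ∀ j, MemLp (ψ j) 2 (volume.restrict (Set.Ioc (0 : ℝ) (2 * Real.pi))))
    (θ₀ : ℝ) (hθ₀ : θ₀ ∈ Set.Ico 0 (2 * Real.pi)) :
    ∃ (N : ℕ) (a b : ℕ → ℝ),
      (fun θ : ℝ => a 0 + ∑ n ∈ Finset.Icc 1 N,
          (a n * Real.cos (n * θ) + b n * Real.sin (n * θ))) θ₀ ≠ 0 ∧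
      ∀ j, ∫ θ in (0 : ℝ)..(2 * Real.pi),
          (a 0 + ∑ n ∈ Finset.Icc 1 N,
            (a n * Real.cos (n * θ) + b n * Real.sin (n * θ))) * ψ j θ = 0 := by
  by_contra hcon
  push_neg at hcon
  -- basic integrability facts
  haveI : Fact (volume (Set.Ioc (0 : ℝ) (2 * Real.pi)) < ⊤) := ⟨measure_Ioc_lt_top⟩
  have hint : ∀ j, Integrable (ψ j) (volume.restrict (Set.Ioc (0 : ℝ) (2 * Real.pi))) :=
    fun j => (hψ j).integrable (by norm_num)
  have hcosint : ∀ (n : ℕ) (j : Fin l),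
      Integrable (fun θ : ℝ => Real.cos (n * (θ - θ₀)) * ψ j θ)
        (volume.restrict (Set.Ioc (0 : ℝ) (2 * Real.pi))) := by
    intro n j
    refine (hint j).bdd_mul (c := 1) ?_ (Filter.Eventually.of_forall fun x => by simpa using Real.abs_cos_le_one _)
    exact (Real.continuous_cos.comp
      (continuous_const.mul (continuous_id.sub continuous_const))).aestronglyMeasurable
  -- the "Fourier data" of the ψ j against the shifted cosine system
  set w : ℕ → Fin l → ℝ := fun n j =>
    ∫ θ in Set.Ioc (0 : ℝ) (2 * Real.pi), Real.cos (n * (θ - θ₀)) * ψ j θ with hw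
  -- expansion of the integral of a cosine polynomial against ψ j
  have key_int : ∀ (N : ℕ) (lam : ℕ → ℝ) (j : Fin l),
      (∫ θ in (0 : ℝ)..(2 * Real.pi),
        (∑ n ∈ Finset.range (N + 1), lam n * Real.cos (n * (θ - θ₀))) * ψ j θ)
      = ∑ n ∈ Finset.range (N + 1), lam n * w n j := by
    intro N lam j
    rw [intervalIntegral.integral_of_le (by positivity)]
    have h1 : (fun θ : ℝ =>
        (∑ n ∈ Finset.range (N + 1), lam n * Real.cos (n * (θ - θ₀))) * ψ j θ)
        = fun θ : ℝ => ∑ n ∈ Finset.range (N + 1),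
            lam n * (Real.cos (n * (θ - θ₀)) * ψ j θ) := by
      funext θ
      rw [Finset.sum_mul]
      exact Finset.sum_congr rfl fun n _ => by ring
    rw [h1, integral_finset_sum _ fun n _ => ((hcosint n j).const_mul (lam n))]
    exact Finset.sum_congr rfl fun n _ => integral_const_mul _ _
  -- Step A: duality. There is α with ∑ j, α j * w n j = 1 for ALL n.
  have hzero : ⨅ j : Fin l,
      LinearMap.ker (Finsupp.linearCombination ℝ (fun n => w n j)) ≤
      LinearMap.ker (Finsupp.linearCombination ℝ (fun _ : ℕ => (1 : ℝ))) := by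
    intro lam hlam
    simp only [Submodule.mem_iInf, LinearMap.mem_ker] at hlam ⊢
    set N := lam.support.sup id with hN
    have hsub : lam.support ⊆ Finset.range (N + 1) := fun n hn =>
      Finset.mem_range.mpr (Nat.lt_succ_of_le (Finset.le_sup (f := id) hn))
    have hLC : ∀ v : ℕ → ℝ, Finsupp.linearCombination ℝ v lam
        = ∑ n ∈ Finset.range (N + 1), lam n * v n := by
      intro v
      rw [Finsupp.linearCombination_apply, Finsupp.sum_of_support_subset _ hsub _ (by simp)]
      simp [smul_eq_mul]
    by_contra hne
    set a : ℕ → ℝ := fun n => if n = 0 then lam 0 else lam n * Real.cos (n * θ₀) with ha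
    set b : ℕ → ℝ := fun n => lam n * Real.sin (n * θ₀) with hb
    have hfun : ∀ θ : ℝ, a 0 + ∑ n ∈ Finset.Icc 1 N,
        (a n * Real.cos (n * θ) + b n * Real.sin (n * θ))
        = ∑ n ∈ Finset.range (N + 1), (lam n : ℝ) * Real.cos (n * (θ - θ₀)) := by
      intro θ
      rw [← trig_identity N (fun n => lam n) θ₀ θ]
      simp only [ha, hb, if_pos rfl]
      congr 1
      refine Finset.sum_congr rfl fun n hn => ?_
      have hn0 : n ≠ 0 := by
        rcases Finset.mem_Icc.mp hn with ⟨h1, _⟩; omega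
      rw [if_neg hn0]
    have heval : (fun θ : ℝ => a 0 + ∑ n ∈ Finset.Icc 1 N,
        (a n * Real.cos (n * θ) + b n * Real.sin (n * θ))) θ₀ ≠ 0 := by
      simp only [hfun θ₀]
      have : ∑ n ∈ Finset.range (N + 1), (lam n : ℝ) * Real.cos (n * (θ₀ - θ₀))
          = ∑ n ∈ Finset.range (N + 1), lam n * 1 := by
        refine Finset.sum_congr rfl fun n _ => by simp
      rw [this]
      simpa [hLC fun _ => (1 : ℝ)] using hne
    obtain ⟨j, hj⟩ := hcon N a b heval
    refine hj ?_
    calc (∫ θ in (0:ℝ)..(2 * Real.pi), (a 0 + ∑ n ∈ Finset.Icc 1 N,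
        (a n * Real.cos (n * θ) + b n * Real.sin (n * θ))) * ψ j θ)
        = ∫ θ in (0:ℝ)..(2 * Real.pi),
            (∑ n ∈ Finset.range (N + 1), lam n * Real.cos (n * (θ - θ₀))) * ψ j θ := by
          congr 1; funext θ; rw [hfun θ]
      _ = ∑ n ∈ Finset.range (N + 1), lam n * w n j := key_int N (fun n => lam n) j
      _ = 0 := by rw [← hLC fun n => w n j]; exact hlam j
  have hK := mem_span_of_iInf_ker_le_ker hzero
  obtain ⟨α, hα⟩ := (Submodule.mem_span_range_iff_exists_fun ℝ).1 hK
  have hα' : ∀ n : ℕ, ∑ j, α j * w n j = 1 := by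
    intro n
    have := congrArg (fun F : (ℕ →₀ ℝ) →ₗ[ℝ] ℝ => F (Finsupp.single n 1)) hα
    simpa [Finsupp.linearCombination_single, smul_eq_mul] using this
  -- Step B: Riemann–Lebesgue contradiction with Ψ = ∑ α j • ψ j
  set Ψ : ℝ → ℝ := fun θ => ∑ j, α j * ψ j θ with hΨ
  have hΨint : Integrable Ψ (volume.restrict (Set.Ioc (0 : ℝ) (2 * Real.pi))) :=
    integrable_finset_sum _ fun j _ => (hint j).const_mul (α j)
  have hwΨ : ∀ n : ℕ,
      (∫ θ in Set.Ioc (0 : ℝ) (2 * Real.pi), Real.cos (n * (θ - θ₀)) * Ψ θ) = 1 := by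
    intro n
    have h1 : (fun θ : ℝ => Real.cos (n * (θ - θ₀)) * Ψ θ)
        = fun θ : ℝ => ∑ j, α j * (Real.cos (n * (θ - θ₀)) * ψ j θ) := by
      funext θ
      rw [hΨ, Finset.mul_sum]
      exact Finset.sum_congr rfl fun j _ => by ring
    rw [h1, integral_finset_sum _ fun j _ => ((hcosint n j).const_mul (α j))]
    calc (∑ j, ∫ θ in Set.Ioc (0:ℝ) (2 * Real.pi),
          α j * (Real.cos (n * (θ - θ₀)) * ψ j θ))
        = ∑ j, α j * w n j := Finset.sum_congr rfl fun j _ => integral_const_mul _ _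
      _ = 1 := hα' n
  -- indicator extension to ℝ, as a complex-valued function
  set F : ℝ → ℂ := fun v => ((Set.indicator (Set.Ioc (0 : ℝ) (2 * Real.pi)) Ψ v : ℝ) : ℂ)
    with hF
  have hFint : Integrable F volume := by
    refine Integrable.ofReal ?_
    exact (integrable_indicator_iff measurableSet_Ioc).mpr hΨint
  have hRL := (Real.tendsto_integral_exp_smul_cocompact F).comp
    (show Filter.Tendsto (fun n : ℕ => -((n : ℝ) / (2 * Real.pi)))
        Filter.atTop (Filter.cocompact ℝ) from
      by
        have h1 : Filter.Tendsto (fun n : ℕ => (n : ℝ) / (2 * Real.pi))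
            Filter.atTop Filter.atTop :=
          (tendsto_natCast_atTop_atTop).atTop_div_const (by positivity)
        have h2 : Filter.Tendsto (fun n : ℕ => -((n : ℝ) / (2 * Real.pi)))
            Filter.atTop Filter.atBot := Filter.tendsto_neg_atBot_iff.mpr h1
        exact h2.mono_right atBot_le_cocompact)
  -- for every n the norm of the relevant integral is at least 1
  have hlow : ∀ n : ℕ,
      (1 : ℝ) ≤ ‖∫ v : ℝ, Real.fourierChar (-(v * -((n : ℝ) / (2 * Real.pi)))) • F v‖ := by
    intro n
    set I : ℂ := ∫ v : ℝ, Real.fourierChar (-(v * -((n : ℝ) / (2 * Real.pi)))) • F v with hI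
    have hchar : ∀ v : ℝ, Real.fourierChar (-(v * -((n : ℝ) / (2 * Real.pi)))) • F v
        = Complex.exp ((((n : ℝ) * v : ℝ) : ℂ) * Complex.I) * F v := by
      intro v
      rw [Circle.smul_def, Real.fourierChar_apply, smul_eq_mul]
      congr 2
      push_cast
      have hπ : (Real.pi : ℂ) ≠ 0 := by
        exact_mod_cast Real.pi_ne_zero
      field_simp
    have hIeq : I = ∫ v : ℝ, Complex.exp ((((n : ℝ) * v : ℝ) : ℂ) * Complex.I) * F v := by
      rw [hI]; congr 1; funext v; exact hchar v
    set J : ℂ := Complex.exp (((-((n : ℝ) * θ₀) : ℝ) : ℂ) * Complex.I) * I with hJ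
    have hJeq : J = ∫ v : ℝ, Complex.exp ((((n : ℝ) * (v - θ₀) : ℝ) : ℂ) * Complex.I) * F v := by
      rw [hJ, hIeq, ← integral_const_mul]
      congr 1; funext v
      rw [← mul_assoc, ← Complex.exp_add]
      congr 2
      push_cast
      ring
    have hJint : Integrable
        (fun v : ℝ => Complex.exp ((((n : ℝ) * (v - θ₀) : ℝ) : ℂ) * Complex.I) * F v)
        volume := by
      have hcont : Continuous fun v : ℝ => ((((n : ℝ) * (v - θ₀) : ℝ)) : ℂ) * Complex.I :=
        (Complex.continuous_ofReal.comp
          (continuous_const.mul (continuous_id.sub continuous_const))).mul continuous_const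
      refine hFint.bdd_mul (c := 1) ?_ (Filter.Eventually.of_forall fun v => ?_)
      · exact (Complex.continuous_exp.comp hcont).aestronglyMeasurable
      · rw [Complex.norm_exp_ofReal_mul_I]
    have hre : J.re = 1 := by
      have hri := integral_re hJint
      simp only [RCLike.re_to_complex] at hri
      rw [hJeq, ← hri]
      have h2 : (fun v : ℝ =>
          (Complex.exp ((((n : ℝ) * (v - θ₀) : ℝ) : ℂ) * Complex.I) * F v).re)
          = Set.indicator (Set.Ioc (0 : ℝ) (2 * Real.pi))
              (fun v => Real.cos (n * (v - θ₀)) * Ψ v) := by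
        funext v
        by_cases hv : v ∈ Set.Ioc (0 : ℝ) (2 * Real.pi)
        · simp only [hF, Set.indicator_of_mem hv]
          rw [Complex.mul_re, Complex.exp_ofReal_mul_I_re, Complex.ofReal_re,
            Complex.ofReal_im, mul_zero, sub_zero]
        · simp only [hF, Set.indicator_of_notMem hv, Complex.ofReal_zero, mul_zero,
            Complex.zero_re]
      rw [h2, integral_indicator measurableSet_Ioc, hwΨ n]
    have h1le : (1 : ℝ) ≤ ‖J‖ := by
      rw [← hre]
      calc (J.re : ℝ) ≤ |J.re| := le_abs_self _
        _ ≤ ‖J‖ := Complex.abs_re_le_norm J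
    have habs : ‖J‖ = ‖I‖ := by
      rw [hJ, norm_mul, Complex.norm_exp_ofReal_mul_I, one_mul]
    calc (1 : ℝ) ≤ ‖J‖ := h1le
      _ = ‖I‖ := habs
      _ = ‖I‖ := rfl
  have := ge_of_tendsto' hRL.norm fun n => hlow n
  norm_num at this
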